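/- Let n be a nonnegative integer such that 6n + 1 is not a perfect square. Then for each δ ∈ {0, 1}, there exist integers x, y, z with x ≡ δ (mod 2) such that 6n + 1 = x² + 3y² + 6z². -/

import Mathlib

/-! ### Helpers -/

lemma round_div (w r : ℤ) (hr : 0 < r) : ∃ k : ℤ, (2*(w + k*r))^2 ≤ r^2 := by
  refine ⟨-((2*w + r) / (2*r)), ?_⟩
  have h0 : 0 ≤ (2*w + r) % (2*r) := Int.emod_nonneg _ (by positivity)
  have h1 : (2*w + r) % (2*r) < 2*r := Int.emod_lt_of_pos _ (by positivity)
  have h2 : (2*w + r) % (2*r) = 2*w + r - 2*r * ((2*w + r) / (2*r)) := Int.emod_def _ _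
  nlinarith [sq_nonneg (2*(w + -((2*w + r) / (2*r))*r))]

lemma bezout2 (u v : ℤ) (h : Int.gcd u v = 1) : ∃ α β : ℤ, α*u + β*v = 1 := by
  obtain ⟨α, β, hab⟩ := (Int.isCoprime_iff_gcd_eq_one.mpr h)
  exact ⟨α, β, by linarith [hab]⟩

/-! ### Binary quadratic forms -/

def q2 (a b f x y : ℤ) : ℤ := a*x^2 + b*y^2 + 2*f*x*y

lemma q2_subst (a b f p q s t x y : ℤ) :
    q2 a b f (p*x+q*y) (s*x+t*y)
      = q2 (q2 a b f p s) (q2 a b f q t) (a*p*q + b*s*t + f*(p*t+q*s)) x y := by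
  unfold q2; ring

lemma q2_det_subst (a b f p q s t : ℤ) :
    (q2 a b f p s) * (q2 a b f q t) - (a*p*q + b*s*t + f*(p*t+q*s))^2
      = (p*t - q*s)^2 * (a*b - f^2) := by unfold q2; ring

lemma unimod2_ne_zero (p q s t x y : ℤ) (hdet : p*t - q*s = 1) (h : ¬(x = 0 ∧ y = 0)) :
    ¬(p*x+q*y = 0 ∧ s*x+t*y = 0) := by
  rintro ⟨h1, h2⟩
  have hx : x = t*(p*x+q*y) - q*(s*x+t*y) := by linear_combination -x * hdet
  have hy : y = p*(s*x+t*y) - s*(p*x+q*y) := by linear_combination -y * hdet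
  rw [h1, h2] at hx hy
  exact h ⟨by linarith, by linarith⟩

lemma q2_values_subst (a b f p q s t : ℤ) (hdet : p*t - q*s = 1) (X Y : ℤ) :
    ∃ x y : ℤ, q2 a b f x y
      = q2 (q2 a b f p s) (q2 a b f q t) (a*p*q + b*s*t + f*(p*t+q*s)) X Y
      ∧ (¬(X = 0 ∧ Y = 0) → ¬(x = 0 ∧ y = 0)) := by
  exact ⟨p*X+q*Y, s*X+t*Y, q2_subst a b f p q s t X Y, unimod2_ne_zero p q s t X Y hdet⟩

lemma gcd_split (x y : ℤ) (h : ¬(x = 0 ∧ y = 0)) :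
    ∃ (g : ℕ) (u v : ℤ), 0 < g ∧ x = g * u ∧ y = g * v ∧ ¬(u = 0 ∧ v = 0) ∧ Int.gcd u v = 1 := by
  have h0 : Int.gcd x y ≠ 0 := by
    intro hc; exact h ⟨Int.gcd_eq_zero_iff.mp hc |>.1, Int.gcd_eq_zero_iff.mp hc |>.2⟩
  obtain ⟨u, hu⟩ := Int.gcd_dvd_left (a := x) (b := y)
  obtain ⟨v, hv⟩ := Int.gcd_dvd_right (a := x) (b := y)
  have hg : Int.gcd x y = (Int.gcd x y) * Int.gcd u v := by
    have h1 : Int.gcd x y = Int.gcd ((Int.gcd x y : ℤ)*u) ((Int.gcd x y : ℤ)*v) := by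
      rw [← hu, ← hv]
    have h2 : Int.gcd ((Int.gcd x y : ℤ)*u) ((Int.gcd x y : ℤ)*v)
        = ((Int.gcd x y : ℤ)).natAbs * Int.gcd u v := Int.gcd_mul_left _ _ _
    simpa using h1.trans h2
  refine ⟨Int.gcd x y, u, v, Nat.pos_of_ne_zero h0, hu, hv, ?_, by
    rcases Nat.eq_zero_or_pos (Int.gcd u v) with h' | h'
    · rw [h'] at hg; omega
    · rcases Nat.lt_or_ge (Int.gcd u v) 2 with h'' | h''
      · omega
      · nlinarith [hg, Nat.pos_of_ne_zero h0]⟩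
  rintro ⟨h1, h2⟩
  exact h ⟨by rw [hu, h1, mul_zero], by rw [hv, h2, mul_zero]⟩

lemma q2_scale (a b f : ℤ) (g : ℕ) (u v : ℤ) : q2 a b f (g*u) (g*v) = g^2 * q2 a b f u v := by
  unfold q2; ring

/-- The set of (nonnegative) values of a binary form at nonzero integer vectors. -/
def S2 (a b f : ℤ) : Set ℕ := {k | ∃ x y : ℤ, ¬(x = 0 ∧ y = 0) ∧ q2 a b f x y = (k : ℤ)}

/-- Main binary reduction lemma. -/
lemma binary_reduce (a b f D : ℤ)
    (hpos : ∀ x y : ℤ, ¬(x = 0 ∧ y = 0) → 0 < q2 a b f x y)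
    (hdet : a*b - f^2 = D) :
    ∃ μ ν κ : ℤ, μ*κ - ν^2 = D ∧ (2*ν)^2 ≤ μ^2 ∧ 0 < μ ∧ μ ≤ κ ∧
      (∃ x y : ℤ, ¬(x = 0 ∧ y = 0) ∧ q2 a b f x y = μ) ∧
      (∀ x y : ℤ, ¬(x = 0 ∧ y = 0) → μ ≤ q2 a b f x y) ∧
      (∀ x y : ℤ, ∃ X Y : ℤ, q2 a b f x y = q2 μ κ ν X Y) := by
  classical
  set S : Set ℕ := {k | ∃ x y : ℤ, ¬(x = 0 ∧ y = 0) ∧ q2 a b f x y = (k : ℤ)} with hS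
  have hSne : S.Nonempty := by
    refine ⟨(q2 a b f 1 0).toNat, 1, 0, by simp, ?_⟩
    rw [Int.toNat_of_nonneg (le_of_lt (hpos 1 0 (by simp)))]
  set μ : ℤ := ((sInf S : ℕ) : ℤ) with hμ
  obtain ⟨x0, y0, hxy0, hq0⟩ := Nat.sInf_mem hSne
  rw [← hμ] at hq0
  have hlow : ∀ x y : ℤ, ¬(x = 0 ∧ y = 0) → μ ≤ q2 a b f x y := by
    intro x y hxy
    have hmem : (q2 a b f x y).toNat ∈ S := by
      refine ⟨x, y, hxy, ?_⟩
      rw [Int.toNat_of_nonneg (le_of_lt (hpos x y hxy))]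
    have := Nat.sInf_le hmem
    have h2 := Int.toNat_of_nonneg (le_of_lt (hpos x y hxy))
    omega
  have hμpos : 0 < μ := by rw [← hq0]; exact hpos x0 y0 hxy0
  have hgcd : Int.gcd x0 y0 = 1 := by
    obtain ⟨g, u, v, hg, hu, hv, huv, hguv⟩ := gcd_split x0 y0 hxy0
    have hsc : q2 a b f x0 y0 = (g:ℤ)^2 * q2 a b f u v := by rw [hu, hv]; exact q2_scale ..
    have h1 : μ ≤ q2 a b f u v := hlow u v huv
    have hg1 : g = 1 := by
      by_contra hne
      have h2g : (2:ℤ) ≤ (g:ℤ) := by exact_mod_cast (by omega : 2 ≤ g)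
      have h4 : (4:ℤ) ≤ (g:ℤ)^2 := by nlinarith [h2g]
      nlinarith [hq0, hsc, h1, hμpos, h4]
    rw [hu, hv, hg1]
    push_cast
    simpa using hguv
  obtain ⟨α, β, hαβ⟩ := bezout2 x0 y0 hgcd
  obtain ⟨k, hk⟩ := round_div (a*x0*(-β) + b*y0*α + f*(x0*α + (-β)*y0)) μ hμpos
  set q' : ℤ := x0*k - β with hq'
  set t' : ℤ := y0*k + α with ht'
  have hdet1 : x0 * t' - q' * y0 = 1 := by rw [hq', ht']; linarith [hαβ]
  set ν : ℤ := a*x0*q' + b*y0*t' + f*(x0*t'+q'*y0) with hν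
  set κ : ℤ := q2 a b f q' t' with hκ
  have hνalt : ν = (a*x0*(-β) + b*y0*α + f*(x0*α + (-β)*y0)) + k * μ := by
    rw [hν, ← hq0, hq', ht']; unfold q2; ring
  refine ⟨μ, ν, κ, ?_, ?_, hμpos, ?_, ⟨x0, y0, hxy0, hq0⟩, hlow, ?_⟩
  · have := q2_det_subst a b f x0 q' y0 t'
    rw [hdet1, hq0, hdet, ← hν, ← hκ] at this
    linarith [this]
  · rw [hνalt]; exact hk
  · have hnz : ¬(q' = 0 ∧ t' = 0) := by
      rintro ⟨h1, h2⟩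
      rw [h1, h2] at hdet1; simp at hdet1
    exact hlow q' t' hnz
  · intro x y
    refine ⟨t'*x - q'*y, -y0*x + x0*y, ?_⟩
    have hsub := q2_subst a b f x0 q' y0 t' (t'*x - q'*y) (-y0*x + x0*y)
    have hx : x0*(t'*x - q'*y) + q'*(-y0*x + x0*y) = x := by linear_combination x * hdet1
    have hy : y0*(t'*x - q'*y) + t'*(-y0*x + x0*y) = y := by linear_combination y * hdet1
    rw [hx, hy, hq0] at hsub
    rw [hsub, ← hν, ← hκ]


/-! ### Ternary quadratic forms -/

def q3 (a b c d e f x y z : ℤ) : ℤ :=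
  a*x^2 + b*y^2 + c*z^2 + 2*d*x*y + 2*e*x*z + 2*f*y*z

def qdet (a b c d e f : ℤ) : ℤ := a*b*c + 2*d*e*f - a*f^2 - b*e^2 - c*d^2

/-- bilinear form associated to `q3` -/
def b3 (a b c d e f x y z X Y Z : ℤ) : ℤ :=
  a*x*X + b*y*Y + c*z*Z + d*(x*Y+X*y) + e*(x*Z+X*z) + f*(y*Z+Y*z)

lemma q3_subst (a b c d e f p q r s t u v w x X Y Z : ℤ) :
    q3 a b c d e f (p*X+q*Y+r*Z) (s*X+t*Y+u*Z) (v*X+w*Y+x*Z)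
      = q3 (q3 a b c d e f p s v) (q3 a b c d e f q t w) (q3 a b c d e f r u x)
          (b3 a b c d e f p s v q t w) (b3 a b c d e f p s v r u x)
          (b3 a b c d e f q t w r u x) X Y Z := by
  unfold q3 b3; ring

lemma qdet_subst (a b c d e f p q r s t u v w x : ℤ) :
    qdet (q3 a b c d e f p s v) (q3 a b c d e f q t w) (q3 a b c d e f r u x)
          (b3 a b c d e f p s v q t w) (b3 a b c d e f p s v r u x)
          (b3 a b c d e f q t w r u x)
      = (p*(t*x - u*w) - q*(s*x - u*v) + r*(s*w - t*v))^2 * qdet a b c d e f := by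
  unfold q3 b3 qdet; ring

/-- Change of variables by a matrix of determinant 1: the new form has equal
determinant, explicit corner entries, and the same value sets (at nonzero vectors). -/
lemma q3_unimod (a b c d e f p q r s t u v w x : ℤ)
    (hdet : p*(t*x - u*w) - q*(s*x - u*v) + r*(s*w - t*v) = 1) :
    ∃ A B C D E F : ℤ,
      A = q3 a b c d e f p s v ∧
      D = b3 a b c d e f p s v q t w ∧
      E = b3 a b c d e f p s v r u x ∧
      qdet A B C D E F = qdet a b c d e f ∧
      (∀ X Y Z : ℤ, ∃ x' y' z', (¬(X=0∧Y=0∧Z=0) → ¬(x'=0∧y'=0∧z'=0)) ∧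
        q3 a b c d e f x' y' z' = q3 A B C D E F X Y Z) ∧
      (∀ x' y' z' : ℤ, ∃ X Y Z, (¬(x'=0∧y'=0∧z'=0) → ¬(X=0∧Y=0∧Z=0)) ∧
        q3 a b c d e f x' y' z' = q3 A B C D E F X Y Z) := by
  refine ⟨q3 a b c d e f p s v, q3 a b c d e f q t w, q3 a b c d e f r u x,
    b3 a b c d e f p s v q t w, b3 a b c d e f p s v r u x, b3 a b c d e f q t w r u x,
    rfl, rfl, rfl, ?_, ?_, ?_⟩
  · rw [qdet_subst, hdet]; ring
  · -- backward: a value of the new form is a value of the old form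
    intro X Y Z
    refine ⟨p*X+q*Y+r*Z, s*X+t*Y+u*Z, v*X+w*Y+x*Z, ?_, q3_subst ..⟩
    intro hne hc
    obtain ⟨h1, h2, h3⟩ := hc
    refine hne ⟨?_, ?_, ?_⟩
    · linear_combination (t*x-u*w)*h1 - (q*x-r*w)*h2 + (q*u-r*t)*h3 - X*hdet
    · linear_combination -(s*x-u*v)*h1 + (p*x-r*v)*h2 - (p*u-r*s)*h3 - Y*hdet
    · linear_combination (s*w-t*v)*h1 - (p*w-q*v)*h2 + (p*t-q*s)*h3 - Z*hdet
  · -- forward: a value of the old form is a value of the new form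
    intro x' y' z'
    refine ⟨(t*x-u*w)*x' - (q*x-r*w)*y' + (q*u-r*t)*z',
            -(s*x-u*v)*x' + (p*x-r*v)*y' - (p*u-r*s)*z',
            (s*w-t*v)*x' - (p*w-q*v)*y' + (p*t-q*s)*z', ?_, ?_⟩
    · intro hne hc
      obtain ⟨h1, h2, h3⟩ := hc
      refine hne ⟨?_, ?_, ?_⟩
      · linear_combination p*h1 + q*h2 + r*h3 - x'*hdet
      · linear_combination s*h1 + t*h2 + u*h3 - y'*hdet
      · linear_combination v*h1 + w*h2 + x*h3 - z'*hdet
    · have hs := q3_subst a b c d e f p q r s t u v w x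
        ((t*x-u*w)*x' - (q*x-r*w)*y' + (q*u-r*t)*z')
        (-(s*x-u*v)*x' + (p*x-r*v)*y' - (p*u-r*s)*z')
        ((s*w-t*v)*x' - (p*w-q*v)*y' + (p*t-q*s)*z')
      have e1 : p*((t*x-u*w)*x' - (q*x-r*w)*y' + (q*u-r*t)*z')
          + q*(-(s*x-u*v)*x' + (p*x-r*v)*y' - (p*u-r*s)*z')
          + r*((s*w-t*v)*x' - (p*w-q*v)*y' + (p*t-q*s)*z') = x' := by
        linear_combination x'*hdet
      have e2 : s*((t*x-u*w)*x' - (q*x-r*w)*y' + (q*u-r*t)*z')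
          + t*(-(s*x-u*v)*x' + (p*x-r*v)*y' - (p*u-r*s)*z')
          + u*((s*w-t*v)*x' - (p*w-q*v)*y' + (p*t-q*s)*z') = y' := by
        linear_combination y'*hdet
      have e3 : v*((t*x-u*w)*x' - (q*x-r*w)*y' + (q*u-r*t)*z')
          + w*(-(s*x-u*v)*x' + (p*x-r*v)*y' - (p*u-r*s)*z')
          + x*((s*w-t*v)*x' - (p*w-q*v)*y' + (p*t-q*s)*z') = z' := by
        linear_combination z'*hdet
      rw [e1, e2, e3] at hs
      exact hs
lemma gcd3_split (x y z : ℤ) (h : ¬(x = 0 ∧ y = 0 ∧ z = 0)) :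
    ∃ (g : ℕ) (u v w : ℤ), 0 < g ∧ x = g * u ∧ y = g * v ∧ z = g * w ∧
      ¬(u = 0 ∧ v = 0 ∧ w = 0) ∧ Int.gcd (Int.gcd u v : ℤ) w = 1 := by
  have h0 : Int.gcd (Int.gcd x y : ℤ) z ≠ 0 := by
    intro hc
    have h1 := Int.gcd_eq_zero_iff.mp hc
    have h2 := Int.gcd_eq_zero_iff.mp (by exact_mod_cast h1.1)
    exact h ⟨h2.1, h2.2, h1.2⟩
  set g : ℕ := Int.gcd (Int.gcd x y : ℤ) z with hgdef
  have hdx : (g:ℤ) ∣ x :=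
    dvd_trans (by exact_mod_cast Int.gcd_dvd_left (a := (Int.gcd x y : ℤ)) (b := z))
      (Int.gcd_dvd_left _ _)
  have hdy : (g:ℤ) ∣ y :=
    dvd_trans (by exact_mod_cast Int.gcd_dvd_left (a := (Int.gcd x y : ℤ)) (b := z))
      (Int.gcd_dvd_right _ _)
  have hdz : (g:ℤ) ∣ z := Int.gcd_dvd_right _ _
  obtain ⟨u, hu⟩ := hdx
  obtain ⟨v, hv⟩ := hdy
  obtain ⟨w, hw⟩ := hdz
  have key : (g:ℕ) = g * Int.gcd (Int.gcd u v : ℤ) w := by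
    have e1 : Int.gcd x y = g * Int.gcd u v := by
      have : Int.gcd x y = Int.gcd ((g:ℤ)*u) ((g:ℤ)*v) := by rw [← hu, ← hv]
      rw [this, Int.gcd_mul_left]; simp
    have e3 : ((Int.gcd x y : ℕ) : ℤ) = (g:ℤ) * (Int.gcd u v : ℤ) := by
      rw [e1]; push_cast; ring
    have e2 : (g:ℕ) = Int.gcd ((g:ℤ) * (Int.gcd u v : ℤ)) ((g:ℤ)*w) := by
      rw [← e3, ← hw]
    have e4 : Int.gcd ((g:ℤ) * (Int.gcd u v : ℤ)) ((g:ℤ)*w)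
        = g * Int.gcd (Int.gcd u v : ℤ) w := by
      rw [Int.gcd_mul_left, Int.natAbs_natCast]
    exact e2.trans e4
  have hgpos : 0 < g := Nat.pos_of_ne_zero h0
  have hone : Int.gcd (Int.gcd u v : ℤ) w = 1 := by
    rcases Nat.eq_zero_or_pos (Int.gcd (Int.gcd u v : ℤ) w) with h' | h'
    · rw [h'] at key; omega
    · rcases Nat.lt_or_ge (Int.gcd (Int.gcd u v : ℤ) w) 2 with h'' | h''
      · omega
      · nlinarith [key, hgpos]
  refine ⟨g, u, v, w, hgpos, hu, hv, hw, ?_, hone⟩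
  rintro ⟨h1, h2, h3⟩
  exact h ⟨by rw [hu, h1, mul_zero], by rw [hv, h2, mul_zero], by rw [hw, h3, mul_zero]⟩

/-- Completion of a primitive vector to a unimodular matrix (as first column). -/
lemma complete3 (p s v : ℤ) (hprim : Int.gcd (Int.gcd p s : ℤ) v = 1) :
    ∃ q r t u w x : ℤ, p*(t*x - u*w) - q*(s*x - u*v) + r*(s*w - t*v) = 1 := by
  by_cases hps : p = 0 ∧ s = 0
  · obtain ⟨hp, hs⟩ := hps
    subst hp hs
    simp only [Int.gcd_zero_left] at hprim
    rcases Int.natAbs_eq_iff.mp (by simpa [Int.gcd] using hprim) with hv | hv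
    · exact ⟨1, 0, 0, 1, 0, 0, by rw [hv]; norm_num⟩
    · exact ⟨1, 0, 0, -1, 0, 0, by rw [hv]; norm_num⟩
  · obtain ⟨g, a1, b1, hgpos, hu, hv', hab, hab1⟩ := gcd_split p s hps
    have hgz : (Int.gcd p s : ℤ) = (g:ℤ) := by
      rw [hu, hv', Int.gcd_mul_left]
      push_cast
      simp [hab1]
    obtain ⟨α, β, hαβ⟩ := bezout2 a1 b1 hab1
    obtain ⟨γ, δ, hγδ⟩ := bezout2 (g:ℤ) v (by rw [← hgz]; exact hprim)
    refine ⟨-β, -δ*a1, α, -δ*b1, 0, γ, ?_⟩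
    have h2 : p*(α*γ - (-δ*b1)*0) - (-β)*(s*γ - (-δ*b1)*v) + (-δ*a1)*(s*0 - α*v)
        = (γ*(g:ℤ) + δ*v)*(α*a1 + β*b1) := by rw [hu, hv']; ring
    rw [h2, hαβ, mul_one]; exact hγδ
set_option maxHeartbeats 1000000 in
theorem detone_rep (a b c d e f : ℤ)
    (hpos : ∀ x y z : ℤ, ¬(x=0∧y=0∧z=0) → 0 < q3 a b c d e f x y z)
    (hdet : qdet a b c d e f = 1)
    (n : ℤ) (x₁ y₁ z₁ : ℤ) (hrep : q3 a b c d e f x₁ y₁ z₁ = n) :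
    ∃ α β γ : ℤ, n = α^2 + β^2 + γ^2 := by
  classical
  set S : Set ℕ := {k | ∃ x y z : ℤ, ¬(x=0∧y=0∧z=0) ∧ q3 a b c d e f x y z = (k:ℤ)} with hS
  have hSne : S.Nonempty := by
    refine ⟨(q3 a b c d e f 1 0 0).toNat, 1, 0, 0, by simp, ?_⟩
    rw [Int.toNat_of_nonneg (le_of_lt (hpos 1 0 0 (by simp)))]
  obtain ⟨m, hm⟩ : ∃ m : ℤ, m = ((sInf S : ℕ) : ℤ) := ⟨_, rfl⟩
  obtain ⟨x0, y0, z0, hxyz0, hq0⟩ := Nat.sInf_mem hSne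
  rw [← hm] at hq0
  have hlow : ∀ x y z : ℤ, ¬(x=0∧y=0∧z=0) → m ≤ q3 a b c d e f x y z := by
    intro x y z hxyz
    have hmem : (q3 a b c d e f x y z).toNat ∈ S := by
      refine ⟨x, y, z, hxyz, ?_⟩
      rw [Int.toNat_of_nonneg (le_of_lt (hpos x y z hxyz))]
    have := Nat.sInf_le hmem
    have h2 := Int.toNat_of_nonneg (le_of_lt (hpos x y z hxyz))
    omega
  have hmpos : 0 < m := by rw [← hq0]; exact hpos x0 y0 z0 hxyz0
  clear hm hS
  -- primitivity of the minimal vector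
  have hgcd : Int.gcd (Int.gcd x0 y0 : ℤ) z0 = 1 := by
    obtain ⟨g, u, v, w, hg, hu, hv, hw, huvw, hguvw⟩ := gcd3_split x0 y0 z0 hxyz0
    have hsc : q3 a b c d e f x0 y0 z0 = (g:ℤ)^2 * q3 a b c d e f u v w := by
      rw [hu, hv, hw]; unfold q3; ring
    have h1 : m ≤ q3 a b c d e f u v w := hlow u v w huvw
    have hg1 : g = 1 := by
      by_contra hne
      have h2g : (2:ℤ) ≤ (g:ℤ) := by exact_mod_cast (by omega : 2 ≤ g)
      have h4 : (4:ℤ) ≤ (g:ℤ)^2 := by nlinarith [h2g]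
      nlinarith [hq0, hsc, h1, hmpos, h4]
    rw [hu, hv, hw, hg1]
    push_cast
    simpa using hguvw
  obtain ⟨Mq, Mr, Mt, Mu, Mw, Mx, hMdet⟩ := complete3 x0 y0 z0 hgcd
  obtain ⟨A, B, C, D, E, F, hA, hD, hE, hdet1, hback1, hfwd1⟩ :=
    q3_unimod a b c d e f x0 Mq Mr y0 Mt Mu z0 Mw Mx hMdet
  have hAm : A = m := by rw [hA, hq0]
  -- shears
  obtain ⟨k, hk⟩ := round_div D m hmpos
  obtain ⟨l, hl⟩ := round_div E m hmpos
  obtain ⟨A2, B2, C2, D2, E2, F2, hA2, hD2, hE2, hdet2, hback2, hfwd2⟩ :=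
    q3_unimod A B C D E F 1 k l 0 1 0 0 0 1 (by norm_num)
  have hA2m : A2 = m := by rw [hA2]; unfold q3; rw [← hAm]; ring
  have hD2v : D2 = D + k*m := by rw [hD2]; unfold b3; rw [← hAm]; ring
  have hE2v : E2 = E + l*m := by rw [hE2]; unfold b3; rw [← hAm]; ring
  have hkD : (2*D2)^2 ≤ m^2 := by rw [hD2v]; exact hk
  have hlE : (2*E2)^2 ≤ m^2 := by rw [hE2v]; exact hl
  have hdet2' : qdet A2 B2 C2 D2 E2 F2 = 1 := by rw [hdet2, hdet1, hdet]
  have hlow2 : ∀ x y z : ℤ, ¬(x=0∧y=0∧z=0) → m ≤ q3 A2 B2 C2 D2 E2 F2 x y z := by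
    intro x y z hxyz
    obtain ⟨x', y', z', hnz1, hval1⟩ := hback2 x y z
    obtain ⟨x'', y'', z'', hnz2, hval2⟩ := hback1 x' y' z'
    rw [← hval1, ← hval2]
    exact hlow _ _ _ (hnz2 (hnz1 hxyz))
  clear hback1 hback2 hA hD hE hA2 hD2 hE2 hD2v hE2v hdet1 hdet2 hAm hk hl hlow
  clear hq0 hxyz0 hgcd hMdet
  -- the projected binary form
  obtain ⟨G1, hG1⟩ : ∃ G1 : ℤ, G1 = m*B2 - D2^2 := ⟨_, rfl⟩
  obtain ⟨G2, hG2⟩ : ∃ G2 : ℤ, G2 = m*C2 - E2^2 := ⟨_, rfl⟩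
  obtain ⟨GF, hGF⟩ : ∃ GF : ℤ, GF = m*F2 - D2*E2 := ⟨_, rfl⟩
  have hGdet : G1*G2 - GF^2 = m := by
    have h9 : G1*G2 - GF^2 = m * qdet m B2 C2 D2 E2 F2 := by
      rw [hG1, hG2, hGF]; unfold qdet; ring
    rw [h9, ← hA2m, hdet2', mul_one]
  have hGlow : ∀ y z : ℤ, ¬(y=0∧z=0) → 3*m^2 ≤ 4 * q2 G1 G2 GF y z := by
    intro y z hyz
    obtain ⟨x, hx⟩ := round_div (D2*y + E2*z) m hmpos
    have hiden : 4*m*(q3 A2 B2 C2 D2 E2 F2 x y z)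
        = (2*(m*x + (D2*y + E2*z)))^2 + 4 * q2 G1 G2 GF y z := by
      rw [hG1, hG2, hGF, ← hA2m]; unfold q3 q2; ring
    have hge : m ≤ q3 A2 B2 C2 D2 E2 F2 x y z := by
      refine hlow2 x y z ?_
      rintro ⟨h1, h2, h3⟩; exact hyz ⟨h2, h3⟩
    have h4m : 4*m*m ≤ 4*m*(q3 A2 B2 C2 D2 E2 F2 x y z) :=
      mul_le_mul_of_nonneg_left hge (by linarith)
    have hx' : (2*((D2*y + E2*z) + x*m))^2 ≤ m^2 := hx
    have hxx : (2*(m*x + (D2*y + E2*z)))^2 ≤ m^2 := by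
      calc (2*(m*x + (D2*y + E2*z)))^2 = (2*((D2*y + E2*z) + x*m))^2 := by ring
        _ ≤ m^2 := hx'
    linarith [hiden, hxx, h4m]
  have hGpos : ∀ y z : ℤ, ¬(y=0∧z=0) → 0 < q2 G1 G2 GF y z := by
    intro y z hyz
    have := hGlow y z hyz
    nlinarith [hmpos]
  obtain ⟨μ, ν, κ, hμκ, h2ν, hμpos, hμleκ, ⟨ym, zm, hymzm, hμval⟩, hμlow, hGtr⟩ :=
    binary_reduce G1 G2 GF m hGpos hGdet
  have hμbig : 3*m^2 ≤ 4*μ := by rw [← hμval]; exact hGlow ym zm hymzm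
  have hμsmall : 3*μ^2 ≤ 4*m := by
    have hp : μ*μ ≤ μ*κ := mul_le_mul_of_nonneg_left hμleκ (le_of_lt hμpos)
    nlinarith [hμκ, h2ν, hp]
  have hm1 : m = 1 := by
    by_contra hne
    have h2m : (2:ℤ) ≤ m := by omega
    have hsq : (3*m^2)*(3*m^2) ≤ (4*μ)*(4*μ) :=
      mul_le_mul hμbig hμbig (by positivity) (by positivity)
    have hm4 : 8*m ≤ m^4 := by nlinarith [h2m]
    nlinarith [hsq, hμsmall, hm4, hmpos, hμpos]
  -- the corner is 1 and off-diagonal entries vanish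
  rw [hm1] at hkD hlE hA2m hlow2
  have hD20 : D2 = 0 := by
    by_contra hne
    have h1 : 1 ≤ D2^2 := by rcases lt_or_gt_of_ne hne with h' | h' <;> nlinarith
    nlinarith [hkD]
  have hE20 : E2 = 0 := by
    by_contra hne
    have h1 : 1 ≤ E2^2 := by rcases lt_or_gt_of_ne hne with h' | h' <;> nlinarith
    nlinarith [hlE]
  -- the bottom binary block
  have hBCdet : B2*C2 - F2^2 = 1 := by
    have h9 : qdet A2 B2 C2 D2 E2 F2 = B2*C2 - F2^2 := by
      rw [hA2m, hD20, hE20]; unfold qdet; ring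
    rw [← h9, hdet2']
  have hBCpos : ∀ y z : ℤ, ¬(y=0∧z=0) → 0 < q2 B2 C2 F2 y z := by
    intro y z hyz
    have h0 : q2 B2 C2 F2 y z = q3 A2 B2 C2 D2 E2 F2 0 y z := by
      rw [hA2m, hD20, hE20]; unfold q2 q3; ring
    rw [h0]
    refine lt_of_lt_of_le one_pos ?_
    exact hlow2 0 y z (by rintro ⟨h1, h2, h3⟩; exact hyz ⟨h2, h3⟩)
  obtain ⟨μ0, ν0, κ0, hμκ0, h2ν0, hμpos0, hμleκ0, -, -, hBCtr⟩ :=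
    binary_reduce B2 C2 F2 1 hBCpos hBCdet
  have hμ0small : 3*μ0^2 ≤ 4 := by
    have hp : μ0*μ0 ≤ μ0*κ0 := mul_le_mul_of_nonneg_left hμleκ0 (le_of_lt hμpos0)
    nlinarith [hμκ0, h2ν0, hp]
  have hμ01 : μ0 = 1 := by
    have hle : μ0 ≤ 1 := by
      by_contra hgt
      have : (2:ℤ) ≤ μ0 := by omega
      nlinarith [hμ0small]
    omega
  have hν00 : ν0 = 0 := by
    rw [hμ01] at h2ν0
    by_contra hne
    have h1 : 1 ≤ ν0^2 := by rcases lt_or_gt_of_ne hne with h' | h' <;> nlinarith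
    nlinarith [h2ν0]
  have hκ01 : κ0 = 1 := by rw [hμ01, hν00] at hμκ0; linarith [hμκ0]
  -- transport the representation of n
  obtain ⟨X1, Y1, Z1, -, hv1⟩ := hfwd1 x₁ y₁ z₁
  obtain ⟨X2, Y2, Z2, -, hv2⟩ := hfwd2 X1 Y1 Z1
  have hn2 : q3 A2 B2 C2 D2 E2 F2 X2 Y2 Z2 = n := by rw [← hv2, ← hv1, hrep]
  have hsplit : n = X2^2 + q2 B2 C2 F2 Y2 Z2 := by
    rw [← hn2, hA2m, hD20, hE20]; unfold q2 q3; ring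
  obtain ⟨Y3, Z3, hYZ⟩ := hBCtr Y2 Z2
  rw [hμ01, hν00, hκ01] at hYZ
  refine ⟨X2, Y3, Z3, ?_⟩
  rw [hsplit, hYZ]; unfold q2; ring
/-- Sylvester-type positivity criterion. -/
lemma pos_of_minors (a b c d e f : ℤ) (ha : 0 < a) (hm2 : 0 < a*b - d^2)
    (hm3 : 0 < qdet a b c d e f) :
    ∀ x y z : ℤ, ¬(x=0∧y=0∧z=0) → 0 < q3 a b c d e f x y z := by
  intro x y z hxyz
  by_contra hq
  push_neg at hq
  have key : (a*b-d^2)*a*(q3 a b c d e f x y z)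
      = (a*b-d^2)*(a*x+d*y+e*z)^2 + ((a*b-d^2)*y + (a*f-d*e)*z)^2
        + a*(qdet a b c d e f)*z^2 := by
    unfold q3 qdet; ring
  have t1 : 0 ≤ (a*b-d^2)*(a*x+d*y+e*z)^2 := by positivity
  have t2 : 0 ≤ ((a*b-d^2)*y + (a*f-d*e)*z)^2 := by positivity
  have t3 : 0 ≤ a*(qdet a b c d e f)*z^2 := by positivity
  have hle : (a*b-d^2)*a*(q3 a b c d e f x y z) ≤ 0 := by
    have := mul_pos hm2 ha
    exact mul_nonpos_of_nonneg_of_nonpos (le_of_lt this) hq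
  have hz2 : z^2 = 0 := by
    have h1 : a*(qdet a b c d e f)*z^2 ≤ 0 := by linarith
    have h2 : 0 < a*(qdet a b c d e f) := mul_pos ha hm3
    nlinarith [sq_nonneg z]
  have hz : z = 0 := by
    have := sq_nonneg z; nlinarith [hz2, sq_nonneg z]
  subst hz
  have hy2 : ((a*b-d^2)*y)^2 = 0 := by
    have h1 : ((a*b-d^2)*y + (a*f-d*e)*0)^2 ≤ 0 := by linarith [key, t1, t3]
    nlinarith [sq_nonneg ((a*b-d^2)*y)]
  have hy : y = 0 := by
    have h3 := pow_eq_zero_iff (n := 2) (by norm_num) |>.mp hy2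
    rcases mul_eq_zero.mp h3 with h4 | h4
    · exfalso; nlinarith
    · exact h4
  subst hy
  have hx2 : (a*x+d*0+e*0)^2 ≤ 0 := by nlinarith [key, t2, t3, hm2]
  have hx : x = 0 := by
    have h3 : (a*x)^2 ≤ 0 := by nlinarith [hx2]
    have h4 : a*x = 0 := by nlinarith [sq_nonneg (a*x)]
    rcases mul_eq_zero.mp h4 with h5 | h5
    · exfalso; exact absurd h5 (ne_of_gt ha)
    · exact h5
  exact hxyz ⟨hx, by simp, by simp⟩

/-- Dirichlet: a prime `p ≡ r (mod 8)`, `p ≡ -1 (mod N)`, `p` large. -/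
lemma good_prime (N : ℕ) (h2 : N % 2 = 1) (h7 : 7 ≤ N) (r : ℕ) (hr : r = 1 ∨ r = 3) :
    ∃ p : ℕ, p.Prime ∧ 8*N < p ∧ p % 8 = r ∧ N ∣ (p + 1) := by
  haveI : NeZero (8*N) := ⟨by omega⟩
  have h2N : Nat.Coprime 2 N := (Nat.Prime.coprime_iff_not_dvd Nat.prime_two).mpr (by omega)
  have h8N : Nat.Coprime 8 N := by
    have := Nat.Coprime.pow_left 3 h2N
    norm_num at this
    exact this
  set e := ZMod.chineseRemainder h8N with he
  set A : ZMod (8*N) := e.symm ((r : ZMod 8), (-1 : ZMod N)) with hA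
  have hAunit : IsUnit A := by
    refine IsUnit.of_mul_eq_one A ?_
    rw [hA, ← map_mul]
    have hrr : ((r : ZMod 8), (-1 : ZMod N)) * ((r : ZMod 8), (-1 : ZMod N)) = 1 := by
      have hr8 : (r : ZMod 8) * (r : ZMod 8) = 1 := by
        rcases hr with h | h <;> subst h <;> decide
      have hrN : (-1 : ZMod N) * (-1 : ZMod N) = 1 := by ring
      rw [Prod.mk_mul_mk, hr8, hrN]; rfl
    rw [hrr, map_one]
  obtain ⟨p, hpgt, hpp, hpa⟩ := Nat.forall_exists_prime_gt_and_eq_mod hAunit (8*N)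
  have h2' : e ((p : ZMod (8*N))) = ((r : ZMod 8), (-1 : ZMod N)) := by
    rw [hpa, hA]; exact e.apply_symm_apply _
  rw [map_natCast] at h2'
  have hfst : (p : ZMod 8) = (r : ZMod 8) := by
    have := congrArg Prod.fst h2'
    simpa using this
  have hsnd : (p : ZMod N) = -1 := by
    have := congrArg Prod.snd h2'
    simpa using this
  refine ⟨p, hpp, hpgt, ?_, ?_⟩
  · have := (ZMod.natCast_eq_natCast_iff p r 8).mp hfst
    unfold Nat.ModEq at this
    omega
  · have hz : ((p + 1 : ℕ) : ZMod N) = 0 := by push_cast [hsnd]; ring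
    exact (ZMod.natCast_eq_zero_iff _ _).mp hz
lemma rep2N (N : ℕ) (h2 : N % 2 = 1) (h3 : N % 3 = 1) (h7 : 7 ≤ N) :
    ∃ α β γ : ℤ, 2*(N:ℤ) = α^2 + β^2 + γ^2 := by
  have hN4 : N % 4 = 1 ∨ N % 4 = 3 := by omega
  -- choose the target residue r mod 8
  obtain ⟨r, hr, hχ⟩ : ∃ r : ℕ, (r = 1 ∨ r = 3) ∧ (N % 4 = 1 ∧ r = 1 ∨ N % 4 = 3 ∧ r = 3) := by
    rcases hN4 with h | h
    · exact ⟨1, Or.inl rfl, Or.inl ⟨h, rfl⟩⟩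
    · exact ⟨3, Or.inr rfl, Or.inr ⟨h, rfl⟩⟩
  obtain ⟨p, hpp, hpgt, hp8, hpN⟩ := good_prime N h2 h7 r hr
  haveI hF : Fact p.Prime := ⟨hpp⟩
  have hp2 : p ≠ 2 := by omega
  have hpodd : p % 2 = 1 := by
    rcases hr with h | h <;> omega
  -- m = (p+1)/(2N)
  have hdvd2N : 2*N ∣ p + 1 := by
    refine (Nat.Coprime.mul_dvd_of_dvd_of_dvd ?_ (by omega) hpN)
    exact (Nat.Prime.coprime_iff_not_dvd Nat.prime_two).mpr (by omega)
  obtain ⟨m, hm⟩ := hdvd2N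
  have hm1 : 1 ≤ m := by
    rcases Nat.eq_zero_or_pos m with h | h
    · rw [h, Nat.mul_zero] at hm; omega
    · omega
  have hmlt : m < p := by nlinarith [hm, h7, hm1, hpgt]
  have hpm : ¬ (p ∣ m) := fun hc => absurd (Nat.le_of_dvd (by omega) hc) (by omega)
  -- Legendre symbol bookkeeping
  have hLone : legendreSym p ((2*N*m : ℕ) : ℤ) = 1 := by
    have harg : ((2*N*m : ℕ) : ℤ) = (p : ℤ) + 1 := by exact_mod_cast congrArg (Nat.cast : ℕ → ℤ) hm.symm
    rw [harg, legendreSym.mod]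
    have : ((p:ℤ) + 1) % p = 1 := by
      have h1 : ((p:ℤ) + 1) % p = (1 + 1*(p:ℤ)) % p := by ring_nf
      rw [h1, Int.add_mul_emod_self_right]
      exact Int.emod_eq_of_lt (by norm_num) (by exact_mod_cast (by omega : 1 < p))
    rw [this]
    have hne : ((1:ℤ) : ZMod p) ≠ 0 := by
      rw [Int.cast_one]; exact one_ne_zero
    exact (legendreSym.eq_one_iff p hne).mpr (by rw [Int.cast_one]; exact IsSquare.one)
  have hsplit : legendreSym p ((2*N*m : ℕ) : ℤ)
      = legendreSym p 2 * legendreSym p (N:ℤ) * legendreSym p (m:ℤ) := by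
    have harg : ((2*N*m : ℕ) : ℤ) = 2 * (N:ℤ) * (m:ℤ) := by push_cast; ring
    rw [harg, legendreSym.mul, legendreSym.mul]
  -- J(N | p) = 1  in both cases
  have hJpN : jacobiSym (p : ℤ) N = ZMod.χ₄ N := by
    have hmod : ((p:ℤ)) % (N:ℤ) = (-1) % (N:ℤ) := by
      have : ((N:ℤ)) ∣ (-1) - (p:ℤ) := by
        have : ((N:ℤ)) ∣ ((p:ℤ) + 1) := by exact_mod_cast Int.natCast_dvd_natCast.mpr hpN
        have h9 : (-1 : ℤ) - p = -((p:ℤ)+1) := by ring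
        rw [h9]; exact dvd_neg.mpr this
      exact Int.modEq_iff_dvd.mpr this
    rw [jacobiSym.mod_left, hmod, ← jacobiSym.mod_left]
    exact jacobiSym.at_neg_one (Nat.odd_iff.mpr h2)
  have hNodd : Odd N := Nat.odd_iff.mpr h2
  have hLN : legendreSym p (N:ℤ) = 1 := by
    rw [jacobiSym.legendreSym.to_jacobiSym]
    rcases hχ with ⟨hN41, hr1⟩ | ⟨hN43, hr3⟩
    · have hp41 : p % 4 = 1 := by omega
      rw [show ((N:ℤ)) = ((N:ℕ):ℤ) by norm_num,
        ← jacobiSym.quadratic_reciprocity_one_mod_four hp41 hNodd, hJpN,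
        ZMod.χ₄_nat_eq_if_mod_four]
      simp [h2, hN41]
    · have hp43 : p % 4 = 3 := by omega
      rw [show ((N:ℤ)) = ((N:ℕ):ℤ) by norm_num,
        jacobiSym.quadratic_reciprocity_three_mod_four hN43 hp43, hJpN,
        ZMod.χ₄_nat_eq_if_mod_four]
      simp [h2, hN43]
  have hL2 : legendreSym p 2 = ZMod.χ₈ p := legendreSym.at_two hp2
  have hLneg1 : legendreSym p (-1) = ZMod.χ₄ p := legendreSym.at_neg_one hp2
  have hLnegm : legendreSym p (-(m:ℤ)) = 1 := by
    have hmul : legendreSym p (-(m:ℤ)) = legendreSym p (-1) * legendreSym p (m:ℤ) := by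
      rw [← legendreSym.mul]; norm_num
    rcases hχ with ⟨hN41, hr1⟩ | ⟨hN43, hr3⟩
    · have hp81 : p % 8 = 1 := by omega
      have hχ8 : ZMod.χ₈ (p : ZMod 8) = 1 := by
        rw [show ((p : ZMod 8)) = ((p:ℕ) : ZMod 8) by norm_num, ZMod.χ₈_nat_eq_if_mod_eight]
        simp [hpodd, hp81]
      have hχ4 : ZMod.χ₄ (p : ZMod 4) = 1 := by
        rw [show ((p : ZMod 4)) = ((p:ℕ) : ZMod 4) by norm_num, ZMod.χ₄_nat_eq_if_mod_four]
        simp [hpodd, (by omega : p % 4 = 1)]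
      have hLm : legendreSym p (m:ℤ) = 1 := by
        have := hLone
        rw [hsplit, hL2, hLN, hχ8] at this
        linarith [this]
      rw [hmul, hLneg1, hχ4, hLm]; ring
    · have hp83 : p % 8 = 3 := by omega
      have hχ8 : ZMod.χ₈ (p : ZMod 8) = -1 := by
        rw [show ((p : ZMod 8)) = ((p:ℕ) : ZMod 8) by norm_num, ZMod.χ₈_nat_eq_if_mod_eight]
        rw [if_neg (by omega : ¬ p % 2 = 0), if_neg (by omega : ¬(p % 8 = 1 ∨ p % 8 = 7))]
      have hχ4 : ZMod.χ₄ (p : ZMod 4) = -1 := by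
        rw [show ((p : ZMod 4)) = ((p:ℕ) : ZMod 4) by norm_num, ZMod.χ₄_nat_eq_if_mod_four]
        rw [if_neg (by omega : ¬ p % 2 = 0), if_neg (by omega : ¬ p % 4 = 1)]
      have hLm : legendreSym p (m:ℤ) = -1 := by
        have := hLone
        rw [hsplit, hL2, hLN, hχ8] at this
        linarith [this]
      rw [hmul, hLneg1, hχ4, hLm]; ring
  -- extract the square root
  have hne0 : ((-(m:ℤ) : ℤ) : ZMod p) ≠ 0 := by
    rw [Ne, ZMod.intCast_zmod_eq_zero_iff_dvd]
    intro hc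
    rw [dvd_neg, Int.natCast_dvd_natCast] at hc
    exact hpm hc
  obtain ⟨s, hs⟩ := (legendreSym.eq_one_iff p hne0).mp hLnegm
  set B : ℤ := (s.val : ℤ) with hBdef
  have hB : ((B : ℤ) : ZMod p) = s := by
    rw [hBdef, Int.cast_natCast, ZMod.natCast_val, ZMod.cast_id]
  have hdvdp : (p:ℤ) ∣ B^2 + (m:ℤ) := by
    have hz : ((B^2 + (m:ℤ) : ℤ) : ZMod p) = 0 := by
      push_cast [hB]
      push_cast at hs
      linear_combination -hs
    exact (ZMod.intCast_zmod_eq_zero_iff_dvd _ p).mp hz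
  obtain ⟨c, hc⟩ := hdvdp
  -- the ternary form
  have hmZ : 2*(N:ℤ)*(m:ℤ) = (p:ℤ) + 1 := by exact_mod_cast congrArg (Nat.cast : ℕ → ℤ) hm.symm
  have hdet : qdet (2*(N:ℤ)) (p:ℤ) c 0 1 B = 1 := by
    unfold qdet
    have h9 : (2*(N:ℤ))*(p:ℤ)*c + 2*0*1*B - (2*(N:ℤ))*B^2 - (p:ℤ)*1^2 - c*0^2
        = 2*(N:ℤ)*((p:ℤ)*c - B^2) - p := by ring
    rw [h9, ← hc]
    linarith [hmZ]
  have hposd : ∀ x y z : ℤ, ¬(x=0∧y=0∧z=0) → 0 < q3 (2*(N:ℤ)) (p:ℤ) c 0 1 B x y z := by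
    refine pos_of_minors _ _ _ _ _ _ (by positivity) ?_ (by rw [hdet]; norm_num)
    have : (0:ℤ) < p := by exact_mod_cast hpp.pos
    nlinarith [this, h7]
  have hval : q3 (2*(N:ℤ)) (p:ℤ) c 0 1 B 1 0 0 = 2*(N:ℤ) := by unfold q3; ring
  exact detone_rep _ _ _ _ _ _ hposd hdet (2*(N:ℤ)) 1 0 0 hval
lemma sqmod4 (t : ℤ) : (t%2 = 0 ∧ t^2%4 = 0) ∨ (t%2 = 1 ∧ t^2%4 = 1) := by
  rcases Int.even_or_odd t with ⟨k, hk⟩ | ⟨k, hk⟩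
  · left
    constructor
    · omega
    · have h1 : t^2 = 4*k^2 := by rw [hk]; ring
      omega
  · right
    constructor
    · omega
    · have h1 : t^2 = 1 + 4*(k^2+k) := by rw [hk]; ring
      omega

lemma sqmod3 (t : ℤ) : (t%3 = 0 ∧ t^2%3 = 0) ∨ (t%3 ≠ 0 ∧ t^2%3 = 1) := by
  have h0 : t = 3*(t/3) + t%3 := by omega
  have h3 : t%3 = 0 ∨ t%3 = 1 ∨ t%3 = 2 := by omega
  rcases h3 with h | h | h
  · left
    refine ⟨h, ?_⟩
    have h1 : t^2 = 9*(t/3)^2 + (6*(t/3))*(t%3) + (t%3)^2 := by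
      conv_lhs => rw [h0]
      ring
    rw [h] at h1; omega
  · right
    refine ⟨by omega, ?_⟩
    have h1 : t^2 = 9*(t/3)^2 + (6*(t/3))*(t%3) + (t%3)^2 := by
      conv_lhs => rw [h0]
      ring
    rw [h] at h1; omega
  · right
    refine ⟨by omega, ?_⟩
    have h1 : t^2 = 9*(t/3)^2 + (6*(t/3))*(t%3) + (t%3)^2 := by
      conv_lhs => rw [h0]
      ring
    rw [h] at h1; omega

lemma toForm_helper (N a b c : ℤ) (ha : a%2 = 1) (hb : b%2 = 1) (hc : c%2 = 0)
    (hd3 : (a - b - c) % 3 = 0) (h : 2*N = a^2 + b^2 + c^2) :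
    ∃ x y z : ℤ, N = x^2 + 3*y^2 + 6*z^2 := by
  obtain ⟨x, hx⟩ : (2:ℤ) ∣ a + b := by omega
  obtain ⟨y, hy⟩ : (6:ℤ) ∣ a - b + 2*c := by omega
  obtain ⟨z, hz⟩ : (6:ℤ) ∣ a - b - c := by omega
  have ha' : a = x + y + 2*z := by omega
  have hb' : b = x - y - 2*z := by omega
  have hc' : c = 2*y - 2*z := by omega
  refine ⟨x, y, z, ?_⟩
  rw [ha', hb', hc'] at h
  have h2 : 2*N = 2*(x^2 + 3*y^2 + 6*z^2) := by linear_combination h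
  linarith [h2]

lemma toForm_aux (N a b c : ℤ) (hN2 : N%2 = 1) (hN3 : N%3 = 1)
    (ha : a%2 = 1) (hb : b%2 = 1) (hc : c%2 = 0) (h : 2*N = a^2 + b^2 + c^2) :
    ∃ x y z : ℤ, N = x^2 + 3*y^2 + 6*z^2 := by
  have sa := sqmod3 a
  have sb := sqmod3 b
  have sc := sqmod3 c
  have hdis : (a-b-c)%3 = 0 ∨ (a-(-b)-c)%3 = 0 ∨ (a-b-(-c))%3 = 0 := by
    have h3a : a%3 = 0 ∨ a%3 = 1 ∨ a%3 = 2 := by omega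
    have h3b : b%3 = 0 ∨ b%3 = 1 ∨ b%3 = 2 := by omega
    have h3c : c%3 = 0 ∨ c%3 = 1 ∨ c%3 = 2 := by omega
    rcases h3a with h'|h'|h' <;> rcases h3b with h''|h''|h'' <;>
      rcases h3c with h'''|h'''|h''' <;> omega
  rcases hdis with hd | hd | hd
  · exact toForm_helper N a b c ha hb hc hd h
  · exact toForm_helper N a (-b) c ha (by omega) hc hd (by linear_combination h)
  · exact toForm_helper N a b (-c) ha hb (by omega) hd (by linear_combination h)

lemma toForm (N : ℤ) (hN2 : N%2 = 1) (hN3 : N%3 = 1) (α β γ : ℤ)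
    (h : 2*N = α^2 + β^2 + γ^2) :
    ∃ x y z : ℤ, N = x^2 + 3*y^2 + 6*z^2 := by
  have sa := sqmod4 α
  have sb := sqmod4 β
  have sc := sqmod4 γ
  have hcase : (α%2=1 ∧ β%2=1 ∧ γ%2=0) ∨ (α%2=1 ∧ β%2=0 ∧ γ%2=1)
      ∨ (α%2=0 ∧ β%2=1 ∧ γ%2=1) := by omega
  rcases hcase with ⟨h1,h2,h3⟩ | ⟨h1,h2,h3⟩ | ⟨h1,h2,h3⟩
  · exact toForm_aux N α β γ hN2 hN3 h1 h2 h3 h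
  · exact toForm_aux N α γ β hN2 hN3 h1 h3 h2 (by linear_combination h)
  · exact toForm_aux N β γ α hN2 hN3 h2 h3 h1 (by linear_combination h)
lemma zw_norm_eq_zero (t : Zsqrtd (-2)) (h : t.norm = 0) : t = 0 := by
  rw [Zsqrtd.norm_def] at h
  have hre : t.re * t.re = 0 := by nlinarith [mul_self_nonneg t.re, mul_self_nonneg t.im]
  have him : t.im * t.im = 0 := by nlinarith [mul_self_nonneg t.re, mul_self_nonneg t.im]
  have h1 : t.re = 0 := by nlinarith [mul_self_nonneg t.re]
  have h2 : t.im = 0 := by nlinarith [mul_self_nonneg t.im]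
  ext <;> simp [h1, h2]

lemma zw_mul_cancel (t u v : Zsqrtd (-2)) (ht : t ≠ 0) (h : t*u = t*v) : u = v := by
  have h0 : t*(u - v) = 0 := by rw [mul_sub, h, sub_self]
  have hn : (t*(u-v)).norm = 0 := by rw [h0]; simp [Zsqrtd.norm_def]
  rw [Zsqrtd.norm_mul] at hn
  have h2 : (u - v).norm = 0 := by
    rcases mul_eq_zero.mp hn with h' | h'
    · exact absurd (zw_norm_eq_zero t h') ht
    · exact h'
  have := zw_norm_eq_zero _ h2
  have h3 : u - v = 0 := this
  linear_combination h3

lemma piDvd (w : Zsqrtd (-2)) : ((⟨1,1⟩ : Zsqrtd (-2)) ∣ w) ↔ (3:ℤ) ∣ w.re - w.im := by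
  constructor
  · rintro ⟨u, hu⟩
    have h1 : w.re = u.re - 2*u.im := by rw [hu]; simp [Zsqrtd.re_mul]; ring
    have h2 : w.im = u.re + u.im := by rw [hu]; simp [Zsqrtd.im_mul]; ring
    exact ⟨-u.im, by omega⟩
  · rintro ⟨c, hc⟩
    refine ⟨⟨w.im + c, -c⟩, ?_⟩
    ext <;> simp [Zsqrtd.re_mul, Zsqrtd.im_mul] <;> omega

lemma pibar_cancel : ∀ (j : ℕ) (t : Zsqrtd (-2)),
    ((⟨1,1⟩:Zsqrtd (-2))^j ∣ t * ⟨1,-1⟩) → ((⟨1,1⟩:Zsqrtd (-2))^j ∣ t) := by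
  intro j
  induction j with
  | zero => intro t _; simpa using one_dvd t
  | succ j ih =>
    intro t h
    have hπt : (⟨1,1⟩:Zsqrtd (-2)) ∣ t := by
      have h1 : (⟨1,1⟩:Zsqrtd (-2)) ∣ t * ⟨1,-1⟩ :=
        dvd_trans (dvd_pow_self _ (Nat.succ_ne_zero j)) h
      rw [piDvd] at h1 ⊢
      have e1 : (t * (⟨1,-1⟩:Zsqrtd (-2))).re = t.re + 2*t.im := by
        simp [Zsqrtd.re_mul]
      have e2 : (t * (⟨1,-1⟩:Zsqrtd (-2))).im = -t.re + t.im := by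
        simp [Zsqrtd.im_mul]
      rw [e1, e2] at h1
      omega
    obtain ⟨t1, ht1⟩ := hπt
    rw [ht1] at h ⊢
    obtain ⟨s, hs⟩ := h
    have hc : t1 * ⟨1,-1⟩ = (⟨1,1⟩:Zsqrtd (-2))^j * s := by
      apply zw_mul_cancel (⟨1,1⟩:Zsqrtd (-2)) _ _
      · intro hz
        have := congrArg Zsqrtd.re hz
        simp at this
      · calc (⟨1,1⟩:Zsqrtd (-2)) * (t1 * ⟨1,-1⟩) = (⟨1,1⟩:Zsqrtd (-2)) * t1 * ⟨1,-1⟩ := by ring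
          _ = (⟨1,1⟩:Zsqrtd (-2))^(j+1) * s := hs
          _ = (⟨1,1⟩:Zsqrtd (-2)) * ((⟨1,1⟩:Zsqrtd (-2))^j * s) := by ring
    have hj : (⟨1,1⟩:Zsqrtd (-2))^j ∣ t1 := ih t1 ⟨s, hc⟩
    obtain ⟨u, hu⟩ := hj
    exact ⟨u, by rw [hu]; ring⟩

lemma zw_norm_pow (k : ℕ) : ((⟨1,1⟩:Zsqrtd (-2))^k).norm = 3^k := by
  induction k with
  | zero => simp [Zsqrtd.norm_def]
  | succ k ih =>
    rw [pow_succ, Zsqrtd.norm_mul, ih]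
    have : (⟨1,1⟩:Zsqrtd (-2)).norm = 3 := by simp [Zsqrtd.norm_def]
    rw [this, pow_succ]

lemma exists_not_pidvd (w : Zsqrtd (-2)) (hw : w ≠ 0) :
    ∃ k : ℕ, ¬ ((⟨1,1⟩:Zsqrtd (-2))^k ∣ w) := by
  have h1 : w.re ≠ 0 ∨ w.im ≠ 0 := by
    by_contra hc
    push_neg at hc
    exact hw (by ext <;> simp [hc.1, hc.2])
  have hpos : 0 < w.norm := by
    rw [Zsqrtd.norm_def]
    rcases h1 with h | h
    · have : 0 < w.re * w.re := mul_self_pos.mpr h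
      nlinarith [mul_self_nonneg w.im]
    · have : 0 < w.im * w.im := mul_self_pos.mpr h
      nlinarith [mul_self_nonneg w.re]
  set nn := w.norm.toNat with hnn
  refine ⟨nn + 1, fun hdvd => ?_⟩
  obtain ⟨u, hu⟩ := hdvd
  have h2 : w.norm = 3^(nn+1) * u.norm := by rw [hu, Zsqrtd.norm_mul, zw_norm_pow]
  have h3 : (3:ℤ)^(nn+1) ∣ w.norm := ⟨u.norm, h2⟩
  have h4 : (3:ℤ)^(nn+1) ≤ w.norm := Int.le_of_dvd hpos h3
  have h5 : (nn:ℤ) = w.norm := by simp [hnn, Int.toNat_of_nonneg (le_of_lt hpos)]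
  have h6 : nn < 3^(nn+1) := by
    calc nn < 2^nn := Nat.lt_two_pow_self
      _ ≤ 3^nn := Nat.pow_le_pow_left (by norm_num) nn
      _ ≤ 3^(nn+1) := Nat.pow_le_pow_right (by norm_num) (by omega)
  have h7 : ((nn:ℤ)) < (3:ℤ)^(nn+1) := by exact_mod_cast h6
  omega
lemma descent (Nv : ℤ) : ∀ (k : ℕ) (x y z : ℤ), x^2+3*y^2+6*z^2 = Nv →
    ¬ ((⟨1,1⟩:Zsqrtd (-2))^k ∣ (⟨y,z⟩ : Zsqrtd (-2))) →
    ∃ y' z' : ℤ, x^2+3*y'^2+6*z'^2 = Nv ∧ ¬((3:ℤ) ∣ y' ∧ (3:ℤ) ∣ z') := by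
  intro k
  induction k with
  | zero => intro x y z _ hdvd; exact absurd (by simpa using one_dvd _) hdvd
  | succ k ih =>
    intro x y z hrep hdvd
    by_cases h3 : (3:ℤ) ∣ y ∧ (3:ℤ) ∣ z
    · obtain ⟨⟨Y, hY⟩, ⟨Z, hZ⟩⟩ := h3
      refine ih x (Y - 4*Z) (2*Y + Z) ?_ ?_
      · rw [hY, hZ] at hrep; linear_combination hrep
      · intro hk
        apply hdvd
        have hw : (⟨y,z⟩ : Zsqrtd (-2)) = (⟨1,1⟩ : Zsqrtd (-2)) * (⟨1,-1⟩ * ⟨Y,Z⟩) := by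
          ext <;> simp [Zsqrtd.re_mul, Zsqrtd.im_mul, hY, hZ] <;> ring
        have hw' : (⟨Y - 4*Z, 2*Y + Z⟩ : Zsqrtd (-2))
            = -((⟨Y,Z⟩ : Zsqrtd (-2)) * ⟨1,-1⟩ * ⟨1,-1⟩) := by
          ext <;> simp [Zsqrtd.re_mul, Zsqrtd.im_mul] <;> ring
        rw [hw', dvd_neg] at hk
        have h1 := pibar_cancel k _ hk
        have h2 := pibar_cancel k _ h1
        obtain ⟨u, hu⟩ := h2
        refine ⟨⟨1,-1⟩ * u, ?_⟩
        rw [hw, hu, pow_succ]; ring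
    · exact ⟨y, z, hrep, h3⟩

lemma flip_helper (Nv x Y Z : ℤ) (hrep : x^2+3*Y^2+6*Z^2 = Nv)
    (hdiv : (x - Y + Z) % 3 = 0) :
    ∃ x' y' z' : ℤ, x'^2+3*y'^2+6*z'^2 = Nv ∧ x' % 2 = Y % 2 := by
  obtain ⟨z', hz'⟩ : (3:ℤ) ∣ x - Y + Z := by omega
  obtain ⟨y', hy'⟩ : (3:ℤ) ∣ x + 2*Y - 2*Z := by omega
  refine ⟨Y + 2*Z, y', z', ?_, by omega⟩
  have h9 : 9*((Y+2*Z)^2 + 3*y'^2 + 6*z'^2) = 9*Nv := by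
    linear_combination 9*hrep + (-3*(x+2*Y-2*Z+3*y'))*hy' + (-6*(x-Y+Z+3*z'))*hz'
  linarith

lemma parity_flip (Nv x y z : ℤ) (hrep : x^2+3*y^2+6*z^2 = Nv) (hN3 : Nv % 3 = 1)
    (hyz : ¬((3:ℤ) ∣ y ∧ (3:ℤ) ∣ z)) :
    ∃ x' y' z' : ℤ, x'^2+3*y'^2+6*z'^2 = Nv ∧ x' % 2 = y % 2 := by
  have hx2 : x^2 % 3 = 1 := by
    have hdvd : (3:ℤ) ∣ Nv - x^2 := ⟨y^2 + 2*z^2, by linarith⟩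
    have hmod : x^2 % 3 = Nv % 3 := Int.modEq_iff_dvd.mpr hdvd
    omega
  have hx3 : x % 3 ≠ 0 := by
    have hs := sqmod3 x
    omega
  have hdis : (x - y + z)%3 = 0 ∨ (x - y - z)%3 = 0 ∨ (x + y + z)%3 = 0
      ∨ (x + y - z)%3 = 0 := by
    have h3y : y%3 = 0 ∨ y%3 = 1 ∨ y%3 = 2 := by omega
    have h3z : z%3 = 0 ∨ z%3 = 1 ∨ z%3 = 2 := by omega
    have h3x : x%3 = 1 ∨ x%3 = 2 := by omega
    rcases h3x with h'|h' <;> rcases h3y with h''|h''|h'' <;>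
      rcases h3z with h'''|h'''|h''' <;> omega
  rcases hdis with hd | hd | hd | hd
  · exact flip_helper Nv x y z hrep (by omega)
  · obtain ⟨x', y', z', h1, h2⟩ := flip_helper Nv x y (-z) (by linear_combination hrep) (by omega)
    exact ⟨x', y', z', h1, h2⟩
  · obtain ⟨x', y', z', h1, h2⟩ := flip_helper Nv x (-y) z (by linear_combination hrep) (by omega)
    exact ⟨x', y', z', h1, by omega⟩
  · obtain ⟨x', y', z', h1, h2⟩ := flip_helper Nv x (-y) (-z) (by linear_combination hrep) (by omega)
    exact ⟨x', y', z', h1, by omega⟩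
lemma sqmod2 (t : ℤ) : t^2 % 2 = t % 2 := by
  have := sqmod4 t
  omega

theorem stmt_15 (n : ℕ) (hns : ¬ IsSquare (6*(n : ℤ) + 1)) (δ : ℤ) (hδ : δ = 0 ∨ δ = 1) :
    ∃ x y z : ℤ, x ≡ δ [ZMOD 2] ∧ 6*(n : ℤ) + 1 = x^2 + 3*y^2 + 6*z^2 := by
  have hn1 : 1 ≤ n := by
    by_contra h
    have hn0 : n = 0 := by omega
    subst hn0
    exact hns ⟨1, by norm_num⟩
  obtain ⟨α, β, γ, hsum⟩ := rep2N (6*n+1) (by omega) (by omega) (by omega)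
  have hNZ : ((6*n+1 : ℕ) : ℤ) = 6*(n:ℤ)+1 := by push_cast; ring
  rw [hNZ] at hsum
  have hN2 : (6*(n:ℤ)+1) % 2 = 1 := by omega
  have hN3 : (6*(n:ℤ)+1) % 3 = 1 := by omega
  obtain ⟨x, y, z, hrep⟩ := toForm (6*(n:ℤ)+1) hN2 hN3 α β γ hsum
  by_cases hpar : x % 2 = δ % 2
  · refine ⟨x, y, z, ?_, hrep⟩
    show Int.ModEq 2 x δ
    unfold Int.ModEq
    omega
  · have hyz0 : ¬(y = 0 ∧ z = 0) := by
      rintro ⟨hy0, hz0⟩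
      apply hns
      exact ⟨x, by rw [hrep, hy0, hz0]; ring⟩
    have hw0 : (⟨y, z⟩ : Zsqrtd (-2)) ≠ 0 := by
      intro hc
      rw [Zsqrtd.ext_iff] at hc
      simp at hc
      exact hyz0 ⟨hc.1, hc.2⟩
    obtain ⟨k, hk⟩ := exists_not_pidvd _ hw0
    obtain ⟨y1, z1, hrep1, hyz1⟩ := descent (6*(n:ℤ)+1) k x y z hrep.symm hk
    obtain ⟨x2, y2, z2, hrep2, hpar2⟩ := parity_flip (6*(n:ℤ)+1) x y1 z1 hrep1 hN3 hyz1
    refine ⟨x2, y2, z2, ?_, hrep2.symm⟩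
    show Int.ModEq 2 x2 δ
    unfold Int.ModEq
    have e1 := sqmod2 x
    have e2 := sqmod2 y1
    have e3 := sqmod2 z1
    generalize hX : x^2 = X at hrep1 e1
    generalize hY : y1^2 = Y at hrep1 e2
    generalize hZ : z1^2 = Z at hrep1 e3
    have h1 : (X + Y) % 2 = 1 := by omega
    have h2 : y1 % 2 = 1 - x % 2 := by omega
    rcases hδ with h|h <;> subst h <;> omega
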